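/- In the N-partite canonical scenario where exactly one party (say party 1) lacks a friend and has n inputs, while each of the other N−1 parties has a friend and exactly 2 inputs, every Local Friendliness behaviour is LHV-modelable (LF(S) = B(S)). -/

import Mathlib

open Finset MeasureTheory

section Framework

variable {I : Type} [Fintype I] [DecidableEq I]
  {M : I → Type} [∀ i, Fintype (M i)] [∀ i, DecidableEq (M i)]
  {O : I → Type} [∀ i, Fintype (O i)] [∀ i, DecidableEq (O i)]

/-- A behaviour: a family of probability distributions over joint outcomes, one per input tuple. -/
def IsBehaviour (p : (∀ i, M i) → (∀ i, O i) → ℝ) : Prop :=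
  (∀ x a, 0 ≤ p x a) ∧ ∀ x, ∑ a, p x a = 1

/-- No-signalling: the marginal over party `i`'s outcome does not depend on party `i`'s input. -/
def NoSignalling (p : (∀ i, M i) → (∀ i, O i) → ℝ) : Prop :=
  ∀ (x x' : ∀ i, M i) (i : I), (∀ j, j ≠ i → x j = x' j) →
    ∀ a : ∀ i, O i,
      ∑ b : O i, p x (Function.update a i b) = ∑ b : O i, p x' (Function.update a i b)

/-- Local hidden variable model (measure-theoretic form): a probability measure on a hidden
variable space together with local response distributions. -/
def IsLHV (p : (∀ i, M i) → (∀ i, O i) → ℝ) : Prop :=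
  ∃ (Λ : Type) (_ : MeasurableSpace Λ) (μ : Measure Λ),
    IsProbabilityMeasure μ ∧
    ∃ R : (i : I) → M i → Λ → O i → ℝ,
      (∀ i xi l a, 0 ≤ R i xi l a) ∧
      (∀ i xi l, ∑ a, R i xi l a = 1) ∧
      (∀ i xi a, Measurable (fun l => R i xi l a)) ∧
      ∀ x a, p x a = ∫ l, (∏ i, R i (x i) l (a i)) ∂μ

/-- Fully deterministic separable model with finitely many hidden variables. -/
def IsLHVFin (p : (∀ i, M i) → (∀ i, O i) → ℝ) : Prop :=
  ∃ (k : ℕ) (w : Fin k → ℝ) (α : (i : I) → M i → Fin k → O i),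
    (∀ l, 0 ≤ w l) ∧ (∑ l, w l = 1) ∧
    ∀ x a, p x a = ∑ l, w l * ∏ i, (if a i = α i (x i) l then (1 : ℝ) else 0)

/-- `J` is a joint probability distribution over all potential outcomes of all measurements of
all parties which reproduces the behaviour `p` by marginalization. -/
def IsJointFor (p : (∀ i, M i) → (∀ i, O i) → ℝ) (J : (∀ i, M i → O i) → ℝ) : Prop :=
  (∀ g, 0 ≤ J g) ∧ (∑ g, J g = 1) ∧
  ∀ x a, p x a = ∑ g ∈ Finset.univ.filter (fun g : ∀ i, M i → O i => ∀ i, g i (x i) = a i), J g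

/-- Local Agency: the marginal on any subset `V` of parties depends only on the inputs of `V`. -/
def LocalAgency (q : (∀ i, M i) → (∀ i, O i) → ℝ) : Prop :=
  ∀ (V : Finset I) (x x' : ∀ i, M i), (∀ i ∈ V, x i = x' i) →
    ∀ a : ∀ i, O i,
      ∑ b ∈ Finset.univ.filter (fun b : ∀ i, O i => ∀ i ∈ V, b i = a i), q x b
        = ∑ b ∈ Finset.univ.filter (fun b : ∀ i, O i => ∀ i ∈ V, b i = a i), q x' b

/-- Local Friendliness decomposition for friend set `F`, where `one i` is the distinguished
(query) input of party `i`. -/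
def IsLF (F : Finset I) (one : ∀ i, M i)
    (p : (∀ i, M i) → (∀ i, O i) → ℝ) : Prop :=
  ∃ (P : (∀ i : {j // j ∈ F}, O i.1) → ℝ)
    (Q : (∀ i : {j // j ∈ F}, O i.1) → (∀ i, M i) → (∀ i, O i) → ℝ),
    (∀ c, 0 ≤ P c) ∧ (∑ c, P c = 1) ∧
    (∀ c x a, 0 ≤ Q c x a) ∧ (∀ c x, ∑ a, Q c x a = 1) ∧
    (∀ c, LocalAgency (Q c)) ∧
    (∀ c x a, (∃ i : {j // j ∈ F}, x i.1 = one i.1 ∧ a i.1 ≠ c i) → Q c x a = 0) ∧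
    ∀ x a, p x a = ∑ c, P c * Q c x a

end Framework

section AuxLF
set_option linter.unusedSectionVars false

variable {I : Type} [Fintype I] [DecidableEq I]
  {M : I → Type} [∀ i, Fintype (M i)] [∀ i, DecidableEq (M i)]
  {O : I → Type} [∀ i, Fintype (O i)] [∀ i, DecidableEq (O i)]

lemma auxLF_filter_eq_image (i₀ : I) (F : Finset I) (hF : ∀ i, i ∈ F ↔ i ≠ i₀)
    (b : ∀ i, O i) :
    (Finset.univ.filter fun b' : ∀ i, O i => ∀ i ∈ F, b' i = b i)
      = Finset.univ.image (fun y : O i₀ => Function.update b i₀ y) := by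
  ext b'
  simp only [mem_filter, mem_univ, true_and, mem_image]
  constructor
  · intro hb
    refine ⟨b' i₀, funext fun i => ?_⟩
    rcases eq_or_ne i i₀ with rfl | hi
    · simp
    · rw [Function.update_of_ne hi]
      exact (hb i ((hF i).2 hi)).symm
  · rintro ⟨y, rfl⟩ i hi
    exact Function.update_of_ne ((hF i).1 hi) _ _

lemma auxLF_sum_filter (i₀ : I) (F : Finset I) (hF : ∀ i, i ∈ F ↔ i ≠ i₀)
    (f : (∀ i, O i) → ℝ) (b : ∀ i, O i) :
    ∑ b' ∈ Finset.univ.filter (fun b' : ∀ i, O i => ∀ i ∈ F, b' i = b i), f b'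
      = ∑ y : O i₀, f (Function.update b i₀ y) := by
  rw [auxLF_filter_eq_image i₀ F hF, Finset.sum_image]
  intro y _ z _ hyz
  have := congrFun hyz i₀
  simpa using this

lemma auxLF_shift (i₀ : I) (a₀ y : O i₀) (f : (∀ i, O i) → ℝ) :
    ∑ b : ∀ i, O i, (if b i₀ = a₀ then f (Function.update b i₀ y) else 0)
      = ∑ b : ∀ i, O i, (if b i₀ = y then f b else 0) := by
  rw [← Finset.sum_filter, ← Finset.sum_filter]
  refine Finset.sum_nbij' (fun b => Function.update b i₀ y)
    (fun b => Function.update b i₀ a₀) ?_ ?_ ?_ ?_ ?_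
  · intro b _
    simp
  · intro b _
    simp
  · intro b hb
    simp only [mem_filter, mem_univ, true_and] at hb
    funext i
    rcases eq_or_ne i i₀ with rfl | hi
    · simp [hb]
    · simp [Function.update_of_ne hi]
  · intro b hb
    simp only [mem_filter, mem_univ, true_and] at hb
    funext i
    rcases eq_or_ne i i₀ with rfl | hi
    · simp [hb]
    · simp [Function.update_of_ne hi]
  · intro b _
    rfl

lemma auxLF_split (i₀ : I) (a₀ : O i₀) (f g : (∀ i, O i) → ℝ)
    (hg : ∀ b y, g (Function.update b i₀ y) = g b) :
    ∑ b : ∀ i, O i, f b * g b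
      = ∑ b : ∀ i, O i, (if b i₀ = a₀
          then (∑ y, f (Function.update b i₀ y)) * g b else 0) := by
  have step : ∀ b : ∀ i, O i,
      (if b i₀ = a₀ then (∑ y, f (Function.update b i₀ y)) * g b else 0)
        = ∑ y, (if b i₀ = a₀ then f (Function.update b i₀ y) * g (Function.update b i₀ y)
            else 0) := by
    intro b
    by_cases hb : b i₀ = a₀
    · rw [if_pos hb, Finset.sum_mul]
      exact Finset.sum_congr rfl fun y _ => by rw [hg, if_pos hb]
    · simp [hb]
  rw [Finset.sum_congr rfl fun b _ => step b, Finset.sum_comm]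
  have step2 : ∀ y : O i₀,
      (∑ b : ∀ i, O i, if b i₀ = a₀ then f (Function.update b i₀ y) *
          g (Function.update b i₀ y) else 0)
        = ∑ b : ∀ i, O i, if b i₀ = y then f b * g b else 0 :=
    fun y => auxLF_shift i₀ a₀ y (fun b => f b * g b)
  rw [Finset.sum_congr rfl fun y _ => step2 y, Finset.sum_comm]
  refine Finset.sum_congr rfl fun b _ => ?_
  simp

variable (one : ∀ i, M i) (i₀ : I)

/-- The second ("other") input of each party. -/
noncomputable def othLF : ∀ i, M i :=
  fun i => if h : ∃ y : M i, y ≠ one i then h.choose else one i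

lemma othLF_ne {i : I} (hMi : Fintype.card (M i) = 2) : othLF one i ≠ one i := by
  have hex : ∃ y : M i, y ≠ one i :=
    Fintype.exists_ne_of_one_lt_card (by omega) (one i)
  simpa [othLF, dif_pos hex] using hex.choose_spec

lemma eq_one_or_othLF {i : I} (hMi : Fintype.card (M i) = 2) (y : M i) :
    y = one i ∨ y = othLF one i := by
  have hne : othLF one i ≠ one i := othLF_ne one hMi
  have hcard : ({one i, othLF one i} : Finset (M i)).card = 2 :=
    Finset.card_pair (Ne.symm hne)
  have huniv : (Finset.univ : Finset (M i)) = {one i, othLF one i} :=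
    (Finset.eq_of_subset_of_card_le (Finset.subset_univ _)
      (by rw [hcard, Fintype.card] at *; omega)).symm
  have : y ∈ ({one i, othLF one i} : Finset (M i)) := huniv ▸ Finset.mem_univ y
  simpa using this

/-- The reference context with party `i₀` at input `m` and everyone else at their
second input. -/
noncomputable def xhatLF (m : M i₀) : ∀ i, M i := Function.update (othLF one) i₀ m

lemma xhatLF_ne {i : I} (hi : i ≠ i₀) (m : M i₀) : xhatLF one i₀ m i = othLF one i :=
  Function.update_of_ne hi _ _

lemma xhatLF_self (m : M i₀) : xhatLF one i₀ m i₀ = m := Function.update_self _ _ _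

variable (q : (∀ i, M i) → (∀ i, O i) → ℝ) (m₀ : M i₀)

/-- Conditional distribution of party `i₀`'s outcome for input `m`, given the other
parties' outcomes in the reference contexts. -/
noncomputable def condLF (m : M i₀) (b : ∀ i, O i) (y : O i₀) : ℝ :=
  if (∑ z, q (xhatLF one i₀ m₀) (Function.update b i₀ z)) = 0
  then (Fintype.card (O i₀) : ℝ)⁻¹
  else q (xhatLF one i₀ m) (Function.update b i₀ y)
        / (∑ z, q (xhatLF one i₀ m₀) (Function.update b i₀ z))

/-- The deterministic local response function. -/
noncomputable def respLF (F : Finset I) (hF : ∀ i, i ∈ F ↔ i ≠ i₀)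
    (c : ∀ i : {j // j ∈ F}, O i.1) (b : ∀ i, O i) (d : M i₀ → O i₀)
    (i : I) (xi : M i) : O i :=
  if h : i = i₀ then cast (congrArg O h).symm (d (cast (congrArg M h) xi))
  else if xi = one i then c ⟨i, (hF i).2 h⟩ else b i

lemma respLF_self (F : Finset I) (hF : ∀ i, i ∈ F ↔ i ≠ i₀)
    (c : ∀ i : {j // j ∈ F}, O i.1) (b : ∀ i, O i) (d : M i₀ → O i₀) (m : M i₀) :
    respLF one i₀ F hF c b d i₀ m = d m := by
  simp [respLF]

lemma respLF_ne (F : Finset I) (hF : ∀ i, i ∈ F ↔ i ≠ i₀)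
    (c : ∀ i : {j // j ∈ F}, O i.1) (b : ∀ i, O i) (d : M i₀ → O i₀)
    {i : I} (h : i ≠ i₀) (xi : M i) :
    respLF one i₀ F hF c b d i xi = if xi = one i then c ⟨i, (hF i).2 h⟩ else b i := by
  simp [respLF, h]

lemma condLF_nonneg (hq0 : ∀ x a, 0 ≤ q x a) (m : M i₀) (b : ∀ i, O i) (y : O i₀) :
    0 ≤ condLF one i₀ q m₀ m b y := by
  unfold condLF
  split
  · positivity
  · exact div_nonneg (hq0 _ _) (Finset.sum_nonneg fun z _ => hq0 _ _)

lemma condLF_sum_one (F : Finset I) (hF : ∀ i, i ∈ F ↔ i ≠ i₀)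
    (hqLA : LocalAgency q) (hO : Nonempty (O i₀)) (m : M i₀) (b : ∀ i, O i) :
    ∑ y, condLF one i₀ q m₀ m b y = 1 := by
  have hμconst : ∑ z, q (xhatLF one i₀ m) (Function.update b i₀ z)
      = ∑ z, q (xhatLF one i₀ m₀) (Function.update b i₀ z) := by
    rw [← auxLF_sum_filter i₀ F hF (q (xhatLF one i₀ m)) b,
      ← auxLF_sum_filter i₀ F hF (q (xhatLF one i₀ m₀)) b]
    exact hqLA F _ _
      (fun i hi => by
        rw [xhatLF_ne one i₀ ((hF i).1 hi), xhatLF_ne one i₀ ((hF i).1 hi)]) b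
  by_cases hz : (∑ z, q (xhatLF one i₀ m₀) (Function.update b i₀ z)) = 0
  · simp only [condLF, if_pos hz, Finset.sum_const, Finset.card_univ, nsmul_eq_mul]
    rw [mul_inv_cancel₀]
    exact_mod_cast Fintype.card_ne_zero (α := O i₀)
  · simp only [condLF, if_neg hz]
    rw [← Finset.sum_div, hμconst, div_self hz]

lemma finConvLF {p : (∀ i, M i) → (∀ i, O i) → ℝ} (Λ : Type) [Fintype Λ]
    (w : Λ → ℝ) (α : (i : I) → M i → Λ → O i)
    (hw0 : ∀ l, 0 ≤ w l) (hw1 : ∑ l, w l = 1)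
    (hrep : ∀ x a, p x a = ∑ l, w l * ∏ i, (if a i = α i (x i) l then (1 : ℝ) else 0)) :
    IsLHVFin p := by
  refine ⟨Fintype.card Λ, fun l => w ((Fintype.equivFin Λ).symm l),
    fun i xi l => α i xi ((Fintype.equivFin Λ).symm l), fun l => hw0 _, ?_, ?_⟩
  · rw [← hw1]
    exact Fintype.sum_equiv (Fintype.equivFin Λ).symm _ _ fun l => rfl
  · intro x a
    rw [hrep x a]
    exact (Fintype.sum_equiv (Fintype.equivFin Λ).symm _ _ fun l => rfl).symm

lemma keyLF (F : Finset I) (hF : ∀ i, i ∈ F ↔ i ≠ i₀)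
    (hM : ∀ i, i ≠ i₀ → Fintype.card (M i) = 2)
    (hq0 : ∀ x a, 0 ≤ q x a) (hq1 : ∀ x, ∑ a, q x a = 1)
    (hqLA : LocalAgency q)
    (c : ∀ i : {j // j ∈ F}, O i.1)
    (hqforce : ∀ x a, (∃ i : {j // j ∈ F}, x i.1 = one i.1 ∧ a i.1 ≠ c i) → q x a = 0)
    (hO : Nonempty (O i₀))
    (x : ∀ i, M i) (a : ∀ i, O i) :
    q x a = ∑ b : ∀ i, O i, ∑ d : M i₀ → O i₀,
      (q (xhatLF one i₀ m₀) b * ∏ m, condLF one i₀ q m₀ m b (d m)) *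
        ∏ i, (if a i = respLF one i₀ F hF c b d i (x i) then (1 : ℝ) else 0) := by
  classical
  -- basic facts about μ and cond
  have hμ0 : ∀ b : ∀ i, O i,
      0 ≤ ∑ z, q (xhatLF one i₀ m₀) (Function.update b i₀ z) :=
    fun b => Finset.sum_nonneg fun z _ => hq0 _ _
  have hμconst : ∀ (m : M i₀) (b : ∀ i, O i),
      ∑ z, q (xhatLF one i₀ m) (Function.update b i₀ z)
        = ∑ z, q (xhatLF one i₀ m₀) (Function.update b i₀ z) := by
    intro m b
    rw [← auxLF_sum_filter i₀ F hF (q (xhatLF one i₀ m)) b,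
      ← auxLF_sum_filter i₀ F hF (q (xhatLF one i₀ m₀)) b]
    exact hqLA F _ _
      (fun i hi => by
        rw [xhatLF_ne one i₀ ((hF i).1 hi), xhatLF_ne one i₀ ((hF i).1 hi)]) b
  have hcond1 : ∀ (m : M i₀) (b : ∀ i, O i),
      ∑ y, condLF one i₀ q m₀ m b y = 1 := by
    intro m b
    by_cases hz : (∑ z, q (xhatLF one i₀ m₀) (Function.update b i₀ z)) = 0
    · simp only [condLF, if_pos hz, Finset.sum_const, Finset.card_univ, nsmul_eq_mul]
      rw [mul_inv_cancel₀]
      exact_mod_cast Fintype.card_ne_zero (α := O i₀)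
    · simp only [condLF, if_neg hz]
      rw [← Finset.sum_div, hμconst m b, div_self hz]
  have hmul : ∀ (m : M i₀) (b : ∀ i, O i),
      (∑ z, q (xhatLF one i₀ m₀) (Function.update b i₀ z)) *
          condLF one i₀ q m₀ m b (a i₀)
        = q (xhatLF one i₀ m) (Function.update b i₀ (a i₀)) := by
    intro m b
    by_cases hz : (∑ z, q (xhatLF one i₀ m₀) (Function.update b i₀ z)) = 0
    · rw [hz, zero_mul]
      have h1 : q (xhatLF one i₀ m) (Function.update b i₀ (a i₀))
          ≤ ∑ z, q (xhatLF one i₀ m) (Function.update b i₀ z) :=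
        Finset.single_le_sum (f := fun z => q (xhatLF one i₀ m) (Function.update b i₀ z))
          (fun z _ => hq0 _ _) (Finset.mem_univ (a i₀))
      have h2 := hμconst m b
      have h3 := hq0 (xhatLF one i₀ m) (Function.update b i₀ (a i₀))
      linarith
    · rw [condLF, if_neg hz, mul_comm, div_mul_cancel₀ _ hz]
  have hcondinv : ∀ (m : M i₀) (b : ∀ i, O i) (y : O i₀) (z : O i₀),
      condLF one i₀ q m₀ m (Function.update b i₀ z) y = condLF one i₀ q m₀ m b y := by
    intro m b y z
    simp only [condLF, Function.update_idem]
  -- d-free response for parties other than i₀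
  set r : (∀ i, O i) → ∀ i, M i → O i :=
    fun b i xi => if h : i ≠ i₀ then (if xi = one i then c ⟨i, (hF i).2 h⟩ else b i)
      else a i with hr
  have hresp : ∀ (b : ∀ i, O i) (d : M i₀ → O i₀) (i : I), i ≠ i₀ →
      respLF one i₀ F hF c b d i (x i) = r b i (x i) := by
    intro b d i hi
    rw [respLF_ne one i₀ F hF c b d hi, hr]
    simp [hi]
  set R : (∀ i, O i) → ℝ :=
    fun b => ∏ i ∈ Finset.univ.erase i₀, (if a i = r b i (x i) then (1 : ℝ) else 0) with hR
  -- Step 1: perform the inner sum over d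
  have hd : ∀ b : ∀ i, O i,
      (∑ d : M i₀ → O i₀,
        (q (xhatLF one i₀ m₀) b * ∏ m, condLF one i₀ q m₀ m b (d m)) *
          ∏ i, (if a i = respLF one i₀ F hF c b d i (x i) then (1 : ℝ) else 0))
        = q (xhatLF one i₀ m₀) b * (condLF one i₀ q m₀ (x i₀) b (a i₀) * R b) := by
    intro b
    have hps : ∀ d : M i₀ → O i₀,
        (∏ i, (if a i = respLF one i₀ F hF c b d i (x i) then (1 : ℝ) else 0))
          = (if a i₀ = d (x i₀) then (1 : ℝ) else 0) * R b := by
      intro d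
      rw [← Finset.mul_prod_erase Finset.univ _ (Finset.mem_univ i₀),
        respLF_self one i₀ F hF c b d]
      congr 1
      refine Finset.prod_congr rfl fun i hi => ?_
      rw [hresp b d i (Finset.mem_erase.1 hi).1]
    calc (∑ d : M i₀ → O i₀,
        (q (xhatLF one i₀ m₀) b * ∏ m, condLF one i₀ q m₀ m b (d m)) *
          ∏ i, (if a i = respLF one i₀ F hF c b d i (x i) then (1 : ℝ) else 0))
        = (q (xhatLF one i₀ m₀) b * R b) *
            ∑ d : M i₀ → O i₀, ∏ m, (condLF one i₀ q m₀ m b (d m) *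
              (if x i₀ = m then (if a i₀ = d m then (1 : ℝ) else 0) else 1)) := by
          rw [Finset.mul_sum]
          refine Finset.sum_congr rfl fun d _ => ?_
          rw [hps d, Finset.prod_mul_distrib]
          have : (∏ m, (if x i₀ = m then (if a i₀ = d m then (1 : ℝ) else 0) else 1))
              = (if a i₀ = d (x i₀) then (1 : ℝ) else 0) := by
            rw [Finset.prod_ite_eq]
            simp
          rw [this]
          ring
      _ = (q (xhatLF one i₀ m₀) b * R b) *
            ∏ m, ∑ y : O i₀, (condLF one i₀ q m₀ m b y *
              (if x i₀ = m then (if a i₀ = y then (1 : ℝ) else 0) else 1)) := by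
          congr 1
          have := Finset.prod_univ_sum (fun _ : M i₀ => (Finset.univ : Finset (O i₀)))
            (fun m y => condLF one i₀ q m₀ m b y *
              (if x i₀ = m then (if a i₀ = y then (1 : ℝ) else 0) else 1))
          rw [Fintype.piFinset_univ] at this
          rw [← this]
      _ = q (xhatLF one i₀ m₀) b * (condLF one i₀ q m₀ (x i₀) b (a i₀) * R b) := by
          have hterm : ∀ m : M i₀,
              (∑ y : O i₀, (condLF one i₀ q m₀ m b y *
                (if x i₀ = m then (if a i₀ = y then (1 : ℝ) else 0) else 1)))
              = (if x i₀ = m then condLF one i₀ q m₀ m b (a i₀) else 1) := by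
            intro m
            by_cases hm : x i₀ = m
            · simp only [if_pos hm, mul_ite, mul_one, mul_zero]
              rw [Finset.sum_ite_eq]
              simp
            · simp only [if_neg hm, mul_one]
              exact hcond1 m b
          rw [Finset.prod_congr rfl fun m _ => hterm m, Finset.prod_ite_eq]
          simp only [Finset.mem_univ, if_true]
          ring
  rw [Finset.sum_congr rfl fun b _ => hd b]
  -- Step 2: integrate out the i₀ coordinate of b
  have hRinv : ∀ (b : ∀ i, O i) (z : O i₀), R (Function.update b i₀ z) = R b := by
    intro b z
    refine Finset.prod_congr rfl fun i hi => ?_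
    have hi' := (Finset.mem_erase.1 hi).1
    rw [hr]
    simp [hi', Function.update_of_ne hi']
  rw [auxLF_split i₀ (a i₀) (q (xhatLF one i₀ m₀))
    (fun b => condLF one i₀ q m₀ (x i₀) b (a i₀) * R b)
    (fun b z => by rw [hcondinv, hRinv])]
  -- Step 3: rewrite the weight as the behaviour at the actual context of party i₀
  have hterm2 : ∀ b : ∀ i, O i,
      (if b i₀ = a i₀ then (∑ y, q (xhatLF one i₀ m₀) (Function.update b i₀ y)) *
          (condLF one i₀ q m₀ (x i₀) b (a i₀) * R b) else 0)
        = (if b i₀ = a i₀ then q (xhatLF one i₀ (x i₀)) b * R b else 0) := by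
    intro b
    by_cases hb : b i₀ = a i₀
    · rw [if_pos hb, if_pos hb, ← mul_assoc, hmul (x i₀) b]
      congr 2
      rw [← hb, Function.update_eq_self]
    · rw [if_neg hb, if_neg hb]
  rw [Finset.sum_congr rfl fun b _ => hterm2 b]
  -- Step 4: case analysis on whether the forced outcomes are consistent
  by_cases hex : ∃ i : {j // j ∈ F}, x i.1 = one i.1 ∧ a i.1 ≠ c i
  · rw [hqforce x a hex]
    obtain ⟨i, hx1, hac⟩ := hex
    have hi0 : i.1 ≠ i₀ := (hF i.1).1 i.2
    symm
    refine Finset.sum_eq_zero fun b _ => ?_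
    have hfac : (if a i.1 = r b i.1 (x i.1) then (1 : ℝ) else 0) = 0 := by
      simp only [hr]
      rw [dif_pos hi0, if_pos hx1]
      exact if_neg hac
    have hR0 : R b = 0 :=
      Finset.prod_eq_zero (Finset.mem_erase.2 ⟨hi0, Finset.mem_univ _⟩) hfac
    rw [hR0, mul_zero]
    simp
  · push_neg at hex
    set T : Finset I := F.filter (fun i => x i ≠ one i) with hT
    set V : Finset I := insert i₀ T with hV
    have hterm3 : ∀ b : ∀ i, O i,
        (if b i₀ = a i₀ then q (xhatLF one i₀ (x i₀)) b * R b else 0)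
          = (if (∀ i ∈ V, b i = a i) then q (xhatLF one i₀ (x i₀)) b else 0) := by
      intro b
      by_cases hb : b i₀ = a i₀
      · rw [if_pos hb]
        by_cases hall : ∀ i ∈ T, b i = a i
        · have hR1 : R b = 1 := by
            refine Finset.prod_eq_one fun i hi => ?_
            have hi0 := (Finset.mem_erase.1 hi).1
            have hiF : i ∈ F := (hF i).2 hi0
            simp only [hr]
            rw [dif_pos hi0]
            by_cases hx1 : x i = one i
            · rw [if_pos hx1, if_pos (hex ⟨i, hiF⟩ hx1)]
            · have hiT : i ∈ T := Finset.mem_filter.2 ⟨hiF, hx1⟩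
              rw [if_neg hx1, if_pos (hall i hiT).symm]
          rw [hR1, mul_one, if_pos]
          rw [hV]
          exact Finset.forall_mem_insert .. |>.2 ⟨hb, hall⟩
        · have hexi : ∃ i ∈ T, b i ≠ a i := by push_neg at hall; exact hall
          obtain ⟨i, hiT, hbi⟩ := hexi
          have hiF : i ∈ F := (Finset.mem_filter.1 hiT).1
          have hx1 : x i ≠ one i := (Finset.mem_filter.1 hiT).2
          have hi0 : i ≠ i₀ := (hF i).1 hiF
          have hR0 : R b = 0 := by
            refine Finset.prod_eq_zero (Finset.mem_erase.2 ⟨hi0, Finset.mem_univ _⟩) ?_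
            simp only [hr]
            rw [dif_pos hi0, if_neg hx1, if_neg (fun hc => hbi hc.symm)]
          rw [hR0, mul_zero, if_neg]
          intro hc
          exact hbi (hc i (Finset.mem_insert_of_mem hiT))
      · rw [if_neg hb, if_neg]
        intro hc
        exact hb (hc i₀ (Finset.mem_insert_self i₀ T))
    rw [Finset.sum_congr rfl fun b _ => hterm3 b, ← Finset.sum_filter]
    have hagree : ∀ i ∈ V, x i = xhatLF one i₀ (x i₀) i := by
      intro i hi
      rcases Finset.mem_insert.1 hi with rfl | hiT
      · rw [xhatLF_self]
      · have hiF : i ∈ F := (Finset.mem_filter.1 hiT).1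
        have hx1 : x i ≠ one i := (Finset.mem_filter.1 hiT).2
        have hi0 : i ≠ i₀ := (hF i).1 hiF
        rw [xhatLF_ne one i₀ hi0]
        rcases eq_one_or_othLF one (hM i hi0) (x i) with h | h
        · exact absurd h hx1
        · exact h
    rw [← hqLA V x (xhatLF one i₀ (x i₀)) hagree a]
    symm
    refine Finset.sum_eq_single_of_mem a
      (Finset.mem_filter.2 ⟨Finset.mem_univ _, fun i _ => rfl⟩) fun b hbmem hbne => ?_
    have hexd : ∃ i, b i ≠ a i := by
      by_contra hc
      push_neg at hc
      exact hbne (funext hc)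
    obtain ⟨i, hbi⟩ := hexd
    have hiV : i ∉ V := fun hiV => hbi ((Finset.mem_filter.1 hbmem).2 i hiV)
    have hi0 : i ≠ i₀ := by
      rintro rfl
      exact hiV (Finset.mem_insert_self i T)
    have hiF : i ∈ F := (hF i).2 hi0
    have hx1 : x i = one i := by
      by_contra hx1
      exact hiV (Finset.mem_insert_of_mem (Finset.mem_filter.2 ⟨hiF, hx1⟩))
    refine hqforce x b ⟨⟨i, hiF⟩, hx1, ?_⟩
    intro hc
    exact hbi (hc.trans (hex ⟨i, hiF⟩ hx1).symm)

end AuxLF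

/-- in the canonical scenario where exactly one party `i₀` lacks a friend
(and has arbitrarily many inputs) while every other party has a friend and exactly two
inputs, every Local Friendliness behaviour is LHV-modelable. -/
theorem lf_eq_bell_one_friendless {I : Type} [Fintype I] [DecidableEq I]
    {M : I → Type} [∀ i, Fintype (M i)] [∀ i, DecidableEq (M i)]
    {O : I → Type} [∀ i, Fintype (O i)] [∀ i, DecidableEq (O i)]
    (i₀ : I) (F : Finset I) (hF : ∀ i, i ∈ F ↔ i ≠ i₀)
    (one : ∀ i, M i) (hM : ∀ i, i ≠ i₀ → Fintype.card (M i) = 2)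
    (p : (∀ i, M i) → (∀ i, O i) → ℝ) (h : IsLF F one p) : IsLHVFin p := by
  classical
  obtain ⟨P, Q, hP0, hP1, hQ0, hQ1, hQLA, hQforce, hdec⟩ := h
  by_cases hM0 : Nonempty (M i₀)
  · obtain ⟨m₀⟩ := hM0
    have hcne : Nonempty (∀ i : {j // j ∈ F}, O i.1) := by
      by_contra hc
      rw [not_nonempty_iff] at hc
      rw [Finset.univ_eq_empty, Finset.sum_empty] at hP1
      exact one_ne_zero hP1.symm
    obtain ⟨c₀⟩ := hcne
    have hane : Nonempty (∀ i, O i) := by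
      by_contra hc
      rw [not_nonempty_iff] at hc
      have h1 := hQ1 c₀ one
      rw [Finset.univ_eq_empty, Finset.sum_empty] at h1
      exact one_ne_zero h1.symm
    have hO : Nonempty (O i₀) := ⟨hane.some i₀⟩
    refine finConvLF ((∀ i : {j // j ∈ F}, O i.1) × (∀ i, O i) × (M i₀ → O i₀))
      (fun l => P l.1 * (Q l.1 (xhatLF one i₀ m₀) l.2.1 *
        ∏ m, condLF one i₀ (Q l.1) m₀ m l.2.1 (l.2.2 m)))
      (fun i xi l => respLF one i₀ F hF l.1 l.2.1 l.2.2 i xi) ?_ ?_ ?_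
    · intro l
      exact mul_nonneg (hP0 _) (mul_nonneg (hQ0 _ _ _)
        (Finset.prod_nonneg fun m _ => condLF_nonneg one i₀ (Q l.1) m₀ (hQ0 l.1) _ _ _))
    · rw [Fintype.sum_prod_type]
      have hmass : ∀ c : ∀ i : {j // j ∈ F}, O i.1,
          (∑ bd : (∀ i, O i) × (M i₀ → O i₀),
            P c * (Q c (xhatLF one i₀ m₀) bd.1 *
              ∏ m, condLF one i₀ (Q c) m₀ m bd.1 (bd.2 m))) = P c := by
        intro c
        rw [Fintype.sum_prod_type]
        have h1 : ∀ b : ∀ i, O i,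
            (∑ d : M i₀ → O i₀, ∏ m, condLF one i₀ (Q c) m₀ m b (d m)) = 1 := by
          intro b
          have h2 := Finset.prod_univ_sum (fun _ : M i₀ => (Finset.univ : Finset (O i₀)))
            (fun m y => condLF one i₀ (Q c) m₀ m b y)
          rw [Fintype.piFinset_univ] at h2
          rw [← h2]
          exact Finset.prod_eq_one fun m _ =>
            condLF_sum_one one i₀ (Q c) m₀ F hF (hQLA c) hO m b
        have h3 : ∀ b : ∀ i, O i,
            (∑ d : M i₀ → O i₀, P c * (Q c (xhatLF one i₀ m₀) b *
              ∏ m, condLF one i₀ (Q c) m₀ m b (d m))) = P c * Q c (xhatLF one i₀ m₀) b := by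
          intro b
          rw [← Finset.mul_sum, ← Finset.mul_sum, h1 b, mul_one]
        rw [Finset.sum_congr rfl fun b _ => h3 b, ← Finset.mul_sum, hQ1 c _, mul_one]
      rw [Finset.sum_congr rfl fun c _ => hmass c, hP1]
    · intro x a
      rw [hdec x a, Fintype.sum_prod_type]
      refine Finset.sum_congr rfl fun c _ => ?_
      rw [keyLF one i₀ (Q c) m₀ F hF hM (hQ0 c) (hQ1 c) (hQLA c) c (hQforce c) hO x a,
        Fintype.sum_prod_type, Finset.mul_sum]
      refine Finset.sum_congr rfl fun b _ => ?_
      rw [Finset.mul_sum]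
      exact Finset.sum_congr rfl fun d _ => by ring
  · have hIem : IsEmpty (∀ i, M i) := ⟨fun x => hM0 ⟨x i₀⟩⟩
    have hOne : ∀ i, i ≠ i₀ → Nonempty (O i) := by
      intro i hi
      by_contra hc
      rw [not_nonempty_iff] at hc
      have : IsEmpty (∀ j : {j // j ∈ F}, O j.1) :=
        ⟨fun c => hc.false (c ⟨i, (hF i).2 hi⟩)⟩
      rw [Finset.univ_eq_empty, Finset.sum_empty] at hP1
      exact one_ne_zero hP1.symm
    refine ⟨1, fun _ => 1,
      fun i xi l => if h : i = i₀ then (hM0 ⟨cast (congrArg M h) xi⟩).elim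
        else (hOne i h).some,
      fun l => zero_le_one, by simp, fun x a => (hIem.false x).elim⟩
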